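/- The shift map σ on the full shift space Σ = (ℕ → Fin m) possesses an unpredictable point: there exist x ∈ Σ, ε > 0, and sequences of natural numbers (tₖ) and (sₖ) with tₖ → ∞ and sₖ → ∞ such that σ^{tₖ}(x) → x as k → ∞ and dist(σ^{tₖ+sₖ}(x), σ^{sₖ}(x)) ≥ ε for all k. -/

import Mathlib

open Filter Set Topology

/-- The shift map `σ` on the sequence space `ℕ → Fin m`, `(σ x) n = x (n + 1)`. -/
def shiftMap {m : ℕ} : (ℕ → Fin m) → (ℕ → Fin m) := fun x n => x (n + 1)

/-- The metric on the full shift space `ℕ → Fin m`: `dist x y = (1/2) ^ n₀`, where `n₀` is the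
first index at which `x` and `y` differ (and `dist x x = 0`). It induces the product topology. -/
noncomputable local instance shiftMetric (m : ℕ) : MetricSpace (ℕ → Fin m) :=
  PiNat.metricSpace

/-- Parity of the number of ones in the binary expansion (Thue–Morse sequence). -/
def tmParity : ℕ → Bool
  | 0 => false
  | n + 1 => (decide ((n + 1) % 2 = 1)).xor (tmParity ((n + 1) / 2))
  decreasing_by exact Nat.div_lt_self (Nat.succ_pos n) one_lt_two

lemma tmParity_eq (a : ℕ) : tmParity a = (decide (a % 2 = 1)).xor (tmParity (a / 2)) := by
  cases a with
  | zero => simp [tmParity]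
  | succ n => rw [tmParity]

lemma tmParity_add_pow (k a : ℕ) (h : a < 2 ^ k) :
    tmParity (2 ^ k + a) = !tmParity a := by
  induction k generalizing a with
  | zero =>
    interval_cases a
    show tmParity 1 = !tmParity 0
    simp [tmParity]
  | succ k ih =>
    have h2 : (2 ^ (k + 1) + a) % 2 = a % 2 := by
      have : 2 ^ (k + 1) % 2 = 0 := by
        simp [pow_succ, Nat.mul_mod]
      omega
    have h3 : (2 ^ (k + 1) + a) / 2 = 2 ^ k + a / 2 := by
      rw [pow_succ]
      omega
    rw [tmParity_eq (2 ^ (k + 1) + a), h2, h3, ih _ (by rw [pow_succ] at h; omega),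
      tmParity_eq a]
    cases decide (a % 2 = 1) <;> cases tmParity (a / 2) <;> rfl

lemma shiftMap_iterate {m : ℕ} (x : ℕ → Fin m) (t n : ℕ) :
    (shiftMap^[t] x) n = x (n + t) := by
  induction t generalizing x n with
  | zero => rfl
  | succ t ih =>
    rw [Function.iterate_succ_apply, ih]
    simp [shiftMap]
    ring_nf

/-- The shift map possesses an unpredictable point. -/
theorem shift_unpredictable (m : ℕ) (hm : 2 ≤ m) :
    ∃ x : ℕ → Fin m, ∃ ε : ℝ, 0 < ε ∧ ∃ t s : ℕ → ℕ,
      Tendsto t atTop atTop ∧ Tendsto s atTop atTop ∧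
      Tendsto (fun k => shiftMap^[t k] x) atTop (𝓝 x) ∧
      ∀ k : ℕ, ε ≤ dist (shiftMap^[t k + s k] x) (shiftMap^[s k] x) := by
  -- the point: Thue–Morse sequence over {0, 1} ⊆ Fin m
  refine ⟨fun n => if tmParity n then ⟨1, by omega⟩ else ⟨0, by omega⟩, 1, one_pos,
    fun k => 3 * 2 ^ k, fun k => 2 ^ (k + 1), ?_, ?_, ?_, ?_⟩
  · exact tendsto_atTop_mono (fun k => le_trans (Nat.lt_two_pow_self (n := k)).le
      (Nat.le_mul_of_pos_left _ (by norm_num))) tendsto_id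
  · exact tendsto_atTop_mono
      (fun k => le_of_lt (lt_of_le_of_lt (Nat.le_succ k) (Nat.lt_two_pow_self (n := k + 1)))) tendsto_id
  · -- convergence: the shifts by 3·2^k agree with x on the first 2^k coordinates
    rw [Metric.tendsto_atTop]
    intro ε hε
    obtain ⟨N, hN⟩ : ∃ N : ℕ, (1 / 2 : ℝ) ^ N < ε := exists_pow_lt_of_lt_one hε (by norm_num)
    refine ⟨N, fun k hk => ?_⟩
    have key : ∀ i < 2 ^ k, tmParity (i + 3 * 2 ^ k) = tmParity i := by
      intro i hi
      have h1 : i + 3 * 2 ^ k = 2 ^ (k + 1) + (2 ^ k + i) := by rw [pow_succ]; ring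
      have h2 : 2 ^ k + i < 2 ^ (k + 1) := by rw [pow_succ]; omega
      rw [h1, tmParity_add_pow _ _ h2, tmParity_add_pow _ _ hi, Bool.not_not]
    have hcyl : (shiftMap^[3 * 2 ^ k] (fun n => if tmParity n then (⟨1, by omega⟩ : Fin m)
        else ⟨0, by omega⟩)) ∈ PiNat.cylinder (fun n => if tmParity n then (⟨1, by omega⟩ : Fin m)
        else ⟨0, by omega⟩) (2 ^ k) := by
      rw [PiNat.mem_cylinder_iff]
      intro i hi
      rw [shiftMap_iterate, key i hi]
    have := PiNat.mem_cylinder_iff_dist_le.1 hcyl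
    calc dist _ _ ≤ (1 / 2 : ℝ) ^ 2 ^ k := this
      _ ≤ (1 / 2 : ℝ) ^ N := by
        apply pow_le_pow_of_le_one (by norm_num) (by norm_num)
        exact hk.trans (Nat.lt_two_pow_self (n := k)).le
      _ < ε := hN
  · -- separation: the sequences differ at coordinate 0
    intro k
    by_contra hlt
    push_neg at hlt
    have h0 : (shiftMap^[3 * 2 ^ k + 2 ^ (k + 1)] (fun n => if tmParity n then (⟨1, by omega⟩ : Fin m)
        else ⟨0, by omega⟩)) 0 = (shiftMap^[2 ^ (k + 1)] (fun n => if tmParity n then (⟨1, by omega⟩ : Fin m)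
        else ⟨0, by omega⟩)) 0 := by
      apply PiNat.apply_eq_of_dist_lt (n := 0) _ le_rfl
      simpa using hlt
    rw [shiftMap_iterate, shiftMap_iterate] at h0
    simp only [Nat.zero_add] at h0
    have hpow : ∀ j : ℕ, tmParity (2 ^ j) = true := by
      intro j
      have := tmParity_add_pow j 0 (by positivity)
      simpa [tmParity] using this
    have ht1 : tmParity (3 * 2 ^ k + 2 ^ (k + 1)) = false := by
      have he : 3 * 2 ^ k + 2 ^ (k + 1) = 2 ^ (k + 2) + 2 ^ k := by
        rw [pow_succ, pow_succ]; ring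
      rw [he, tmParity_add_pow _ _ (Nat.pow_lt_pow_right one_lt_two (by omega)), hpow k]
      rfl
    have ht2 : tmParity (2 ^ (k + 1)) = true := hpow (k + 1)
    rw [ht1, ht2] at h0
    simp only [Bool.false_eq_true, if_false, if_true] at h0
    have h1 := congrArg Fin.val h0
    simp at h1
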